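/- Let M be a strong k-chromatic-choosable graph with n vertices and m edges satisfying m ≤ n(k−2), and let H be a graph with a Hamilton path w_1, …, w_t such that each w_i has at most ρ ≥ 1 neighbors among w_1, …, w_{i−1}. Then the list chromatic number of the Cartesian product M □ H is at most k + ρ − 1. -/

import Mathlib

open SimpleGraph Finset

section ListColoringDefs

variable {V : Type*}

/-- `f` is a proper coloring of `G` choosing each color from the list `L v`. -/
def IsProperListColoring (G : SimpleGraph V) (L : V → Finset ℕ) (f : V → ℕ) : Prop :=
  (∀ v, f v ∈ L v) ∧ ∀ u v, G.Adj u v → f u ≠ f v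

/-- `G` admits a proper coloring from the list assignment `L`. -/
def ListColorable (G : SimpleGraph V) (L : V → Finset ℕ) : Prop :=
  ∃ f, IsProperListColoring G L f

/-- `G` is colorable from every list assignment with lists of size at least `m`. -/
def Choosable (G : SimpleGraph V) (m : ℕ) : Prop :=
  ∀ L : V → Finset ℕ, (∀ v, m ≤ (L v).card) → ListColorable G L

/-- The list chromatic number of `G`. -/
noncomputable def listChromaticNumber (G : SimpleGraph V) : ℕ :=
  sInf { m | Choosable G m }

/-- `G` is strong `k`-chromatic-choosable: `χ(G) = k` and every `(k-1)`-assignment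
from which `G` is not colorable is constant. -/
def StrongCC (G : SimpleGraph V) (k : ℕ) : Prop :=
  G.chromaticNumber = (k : ℕ∞) ∧
    ∀ L : V → Finset ℕ, (∀ v, (L v).card = k - 1) → ¬ ListColorable G L →
      ∀ u v : V, L u = L v

/-- The number of proper `L`-colorings of `G`. -/
noncomputable def numColorings (G : SimpleGraph V) (L : V → Finset ℕ) : ℕ :=
  Set.ncard { f : V → ℕ | IsProperListColoring G L f }

/-- The list color function `P_ℓ(G,k)`: the minimum number of proper `L`-colorings
over all `k`-assignments `L`. -/
noncomputable def listColorFunction (G : SimpleGraph V) (k : ℕ) : ℕ :=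
  sInf { n | ∃ L : V → Finset ℕ, (∀ v, (L v).card = k) ∧ n = numColorings G L }

/-- The chromatic polynomial `P(G,k)`: the number of proper colorings with colors
from `{0, …, k-1}`. -/
noncomputable def chromPoly (G : SimpleGraph V) (k : ℕ) : ℕ :=
  numColorings G (fun _ => Finset.range k)

/-- The join `G ∨ K_p` of `G` with the complete graph on `p` vertices. -/
def joinK (G : SimpleGraph V) (p : ℕ) : SimpleGraph (V ⊕ Fin p) :=
  SimpleGraph.fromRel (fun a b =>
    match a, b with
    | Sum.inl u, Sum.inl v => G.Adj u v
    | _, _ => True)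

/-- The star `K_{1,s}`: center `none` adjacent to the `s` leaves. -/
def starGraph (s : ℕ) : SimpleGraph (Option (Fin s)) :=
  SimpleGraph.fromRel (fun a _ => a = none)

/-- The cycle graph `C_n` on `Fin n` (for `n ≥ 3`). -/
def cycGraph (n : ℕ) : SimpleGraph (Fin n) :=
  SimpleGraph.fromRel (fun a b => b.val = (a.val + 1) % n)

end ListColoringDefs


section AuxStmt10

open Polynomial Finset SimpleGraph

lemma basis_eq_weight_mul_nodal_erase {s : Finset ℚ} {x : ℚ} (hx : x ∈ s) :
    Lagrange.basis s id x = C (Lagrange.nodalWeight s id x) * Lagrange.nodal (s.erase x) id := by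
  rw [Lagrange.basis_eq_prod_sub_inv_mul_nodal_div hx, Lagrange.nodal_erase_eq_nodal_div hx]

lemma coeff_card_pred_interpolate {s : Finset ℚ} (r : ℚ → ℚ) :
    (Lagrange.interpolate s id r).coeff (s.card - 1) =
      ∑ x ∈ s, r x * Lagrange.nodalWeight s id x := by
  rw [Lagrange.interpolate_apply, Polynomial.finset_sum_coeff]
  refine Finset.sum_congr rfl (fun x hx => ?_)
  rw [basis_eq_weight_mul_nodal_erase hx, ← mul_assoc, ← C_mul, coeff_C_mul]
  have hmon : (Lagrange.nodal (s.erase x) id).Monic := Lagrange.nodal_monic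
  have hdeg : (Lagrange.nodal (s.erase x) id).natDegree = s.card - 1 := by
    rw [Lagrange.natDegree_nodal, Finset.card_erase_of_mem hx]
  rw [← hdeg, hmon.coeff_natDegree, mul_one]

-- Lemma U
lemma sum_pow_mul_nodalWeight {s : Finset ℚ} (j : ℕ) (hj : j ≤ s.card - 1) (hs : s.Nonempty) :
    ∑ x ∈ s, x ^ j * Lagrange.nodalWeight s id x =
      if j = s.card - 1 then 1 else 0 := by
  have hinj : Set.InjOn (id : ℚ → ℚ) s := Set.injOn_id _
  have hdeg : (X ^ j : ℚ[X]).degree < s.card := by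
    rw [degree_X_pow]
    exact_mod_cast lt_of_le_of_lt (by exact_mod_cast hj)
      (by exact_mod_cast Nat.sub_lt (Finset.card_pos.2 hs) one_pos)
  have h := Lagrange.eq_interpolate (f := (X : ℚ[X]) ^ j) hinj hdeg
  have h2 := congrArg (fun p => Polynomial.coeff p (s.card - 1)) h.symm
  rw [coeff_card_pred_interpolate] at h2
  rw [coeff_X_pow] at h2
  simp only [eval_pow, eval_X, id] at h2
  rw [h2]
  simp [eq_comm]


variable {V : Type*} [Fintype V] [DecidableEq V]

lemma grid_sum_monomial (S : V → Finset ℚ) (t : V → ℕ)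
    (hcard : ∀ v, (S v).card = t v + 1)
    (α : V →₀ ℕ) (c : ℚ) (hα : (∑ v, α v) ≤ ∑ v, t v) :
    ∑ y ∈ Fintype.piFinset S,
        MvPolynomial.eval y (MvPolynomial.monomial α c) *
          ∏ v, Lagrange.nodalWeight (S v) id (y v) =
      (if ∀ v, α v = t v then c else 0) := by
  have hne : ∀ v, (S v).Nonempty := fun v => Finset.card_pos.1 (by rw [hcard v]; omega)
  have key : ∀ y : V → ℚ,
      MvPolynomial.eval y (MvPolynomial.monomial α c) * ∏ v, Lagrange.nodalWeight (S v) id (y v)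
      = c * ∏ v, ((y v) ^ (α v) * Lagrange.nodalWeight (S v) id (y v)) := by
    intro y
    rw [MvPolynomial.eval_monomial, Finset.prod_mul_distrib]
    rw [Finsupp.prod_fintype _ _ (fun v => pow_zero (y v))]
    ring
  simp_rw [key, ← Finset.mul_sum]
  have hswap : ∑ y ∈ Fintype.piFinset S,
      ∏ v, ((y v) ^ (α v) * Lagrange.nodalWeight (S v) id (y v))
      = ∏ v, ∑ x ∈ S v, (x ^ (α v) * Lagrange.nodalWeight (S v) id x) :=
    (Finset.prod_univ_sum S (fun v x => x ^ (α v) * Lagrange.nodalWeight (S v) id x)).symm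
  rw [hswap]
  by_cases hall : ∀ v, α v ≤ t v
  · have hfac : ∀ v, ∑ x ∈ S v, x ^ (α v) * Lagrange.nodalWeight (S v) id x
        = if α v = t v then 1 else 0 := by
      intro v
      have := sum_pow_mul_nodalWeight (s := S v) (α v) (by rw [hcard v]; have := hall v; omega) (hne v)
      rw [this, hcard v]
      simp only [Nat.add_sub_cancel]
    simp_rw [hfac]
    rw [Finset.prod_boole]
    simp only [Finset.mem_univ, forall_true_left]
    by_cases h : ∀ v, α v = t v <;> simp [h]
  · push_neg at hall
    obtain ⟨v₀, hv₀⟩ := hall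
    have hifneg : ¬ (∀ v, α v = t v) := fun h => by have := h v₀; omega
    rw [if_neg hifneg]
    have hex : ∃ v₁, α v₁ < t v₁ := by
      by_contra hno
      push_neg at hno
      have : ∑ v, t v < ∑ v, α v :=
        Finset.sum_lt_sum (fun i _ => hno i) ⟨v₀, Finset.mem_univ _, hv₀⟩
      omega
    obtain ⟨v₁, hv₁⟩ := hex
    have hfac0 : ∑ x ∈ S v₁, x ^ (α v₁) * Lagrange.nodalWeight (S v₁) id x = 0 := by
      have := sum_pow_mul_nodalWeight (s := S v₁) (α v₁) (by rw [hcard v₁]; omega) (hne v₁)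
      rw [this, if_neg (by rw [hcard v₁]; omega)]
    rw [Finset.prod_eq_zero (Finset.mem_univ v₁) hfac0, mul_zero]

lemma coeff_eq_grid_sum (P : MvPolynomial V ℚ) (S : V → Finset ℚ) (t : V →₀ ℕ)
    (hcard : ∀ v, (S v).card = t v + 1)
    (hdeg : P.totalDegree ≤ ∑ v, t v) :
    MvPolynomial.coeff t P =
      ∑ y ∈ Fintype.piFinset S,
        MvPolynomial.eval y P * ∏ v, Lagrange.nodalWeight (S v) id (y v) := by
  conv_lhs => rw [P.as_sum]
  have hrhs : ∀ y : V → ℚ, MvPolynomial.eval y P * ∏ v, Lagrange.nodalWeight (S v) id (y v)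
      = ∑ α ∈ P.support, MvPolynomial.eval y (MvPolynomial.monomial α (MvPolynomial.coeff α P))
          * ∏ v, Lagrange.nodalWeight (S v) id (y v) := by
    intro y
    conv_lhs => rw [P.as_sum]
    rw [map_sum, Finset.sum_mul]
  simp_rw [hrhs]
  rw [Finset.sum_comm, MvPolynomial.coeff_sum]
  refine Finset.sum_congr rfl (fun α hα => ?_)
  have hsum : (∑ v, α v) ≤ ∑ v, t v := by
    refine le_trans ?_ hdeg
    have h1 : (α.sum fun _ e => e) ≤ P.totalDegree := MvPolynomial.le_totalDegree hα
    rwa [Finsupp.sum_fintype _ _ (fun _ => rfl)] at h1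
  rw [grid_sum_monomial S (fun v => t v) hcard α _ hsum, MvPolynomial.coeff_monomial]
  congr 1
  · rw [eq_iff_iff]
    constructor
    · intro h; rw [h]; intro v; rfl
    · intro h; ext v; exact h v


lemma no_unique_coloring (M : SimpleGraph V) [Fintype M.edgeSet] (k : ℕ) (hk : 2 ≤ k)
    (hχ : ¬ M.Colorable (k-1)) (hedge : M.edgeFinset.card ≤ (Fintype.card V) * (k-2))
    (L : V → Finset ℕ) (hL : ∀ v, k-1 ≤ (L v).card)
    (f : V → ℕ) (hf : IsProperListColoring M L f)
    (huniq : ∀ g, IsProperListColoring M L g → g = f) : False := by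
  classical
  -- orientation of the edges
  set n := Fintype.card V with hn
  let eqv := Fintype.equivFin V
  let D : Finset (V × V) := univ.filter (fun p => M.Adj p.1 p.2 ∧ eqv p.1 < eqv p.2)
  have hD1 : ∀ p ∈ D, M.Adj p.1 p.2 := fun p hp => ((Finset.mem_filter.1 hp).2).1
  have hD2 : ∀ {u v : V}, M.Adj u v → (u, v) ∈ D ∨ (v, u) ∈ D := by
    intro u v hadj
    have hne : eqv u ≠ eqv v := fun h => M.ne_of_adj hadj (eqv.injective h)
    rcases lt_or_gt_of_ne hne with h | h
    · exact Or.inl (Finset.mem_filter.2 ⟨Finset.mem_univ _, hadj, h⟩)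
    · exact Or.inr (Finset.mem_filter.2 ⟨Finset.mem_univ _, hadj.symm, h⟩)
  have hD3 : D.card ≤ M.edgeFinset.card := by
    refine Finset.card_le_card_of_injOn (fun p => s(p.1, p.2)) ?_ ?_
    · intro p hp
      rw [Finset.mem_coe, SimpleGraph.mem_edgeFinset]
      exact (hD1 p hp)
    · intro p hp q hq hpq
      obtain ⟨hp1, hp2⟩ := (Finset.mem_filter.1 hp).2
      obtain ⟨hq1, hq2⟩ := (Finset.mem_filter.1 hq).2
      rcases Sym2.mk_eq_mk_iff.mp hpq with h | h
      · exact h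
      · exfalso
        have h1 : p.1 = q.2 := by rw [h]; rfl
        have h2 : p.2 = q.1 := by rw [h]; rfl
        rw [h1, h2] at hp2
        exact absurd hq2 (not_lt_of_gt hp2)
  -- the graph polynomial
  let Q : MvPolynomial V ℚ := ∏ p ∈ D, (MvPolynomial.X p.1 - MvPolynomial.X p.2)
  have hQdeg : Q.totalDegree ≤ D.card := by
    refine le_trans (MvPolynomial.totalDegree_finset_prod D _) ?_
    calc ∑ p ∈ D, (MvPolynomial.X p.1 - MvPolynomial.X (R := ℚ) p.2).totalDegree
        ≤ ∑ _p ∈ D, 1 := by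
          refine Finset.sum_le_sum (fun p _ => ?_)
          refine le_trans (MvPolynomial.totalDegree_sub _ _) ?_
          simp [MvPolynomial.totalDegree_X]
      _ = D.card := by simp
  have hQeval : ∀ y : V → ℚ, MvPolynomial.eval y Q = ∏ p ∈ D, (y p.1 - y p.2) := by
    intro y
    rw [map_prod]
    simp
  have hQzero : ∀ (y : V → ℚ) {u v : V}, M.Adj u v → y u = y v → MvPolynomial.eval y Q = 0 := by
    intro y u v hadj heq
    rw [hQeval]
    rcases hD2 hadj with h | h
    · exact Finset.prod_eq_zero h (by simp [heq])
    · exact Finset.prod_eq_zero h (by simp [heq])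
  have hQne : ∀ (h : V → ℕ), (∀ u v, M.Adj u v → h u ≠ h v) →
      MvPolynomial.eval (fun v => ((h v : ℚ))) Q ≠ 0 := by
    intro h hprop
    rw [hQeval]
    refine Finset.prod_ne_zero_iff.2 (fun p hp => ?_)
    have := hprop _ _ (hD1 p hp)
    intro hzero
    have : (h p.1 : ℚ) = (h p.2 : ℚ) := sub_eq_zero.1 hzero
    exact hprop _ _ (hD1 p hp) (Nat.cast_injective this)
  -- the lists as rational grids
  have hL1 : ∀ v, 1 ≤ (L v).card := fun v => Finset.card_pos.2 ⟨f v, hf.1 v⟩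
  let t0 : V → ℕ := fun v => (L v).card - 1
  let t : V →₀ ℕ := Finsupp.equivFunOnFinite.symm t0
  have ht : ∀ v, t v = t0 v := fun v => rfl
  let S : V → Finset ℚ := fun v => (L v).image (fun c : ℕ => (c : ℚ))
  have hScard : ∀ v, (S v).card = t v + 1 := by
    intro v
    rw [ht]
    rw [Finset.card_image_of_injective _ Nat.cast_injective]
    have := hL1 v
    simp only [t0]
    omega
  have ht0sum : (∑ _v : V, (k-2)) ≤ ∑ v, t0 v := by
    refine Finset.sum_le_sum (fun v _ => ?_)
    have := hL v
    simp only [t0]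
    omega
  have hchain : Q.totalDegree ≤ ∑ v, t0 v := by
    refine le_trans hQdeg (le_trans hD3 (le_trans hedge ?_))
    rw [hn]
    calc Fintype.card V * (k-2) = ∑ _v : V, (k-2) := by
          rw [Finset.sum_const, Finset.card_univ, smul_eq_mul]
        _ ≤ ∑ v, t0 v := ht0sum
  have hsum_t : (∑ v, t v) = ∑ v, t0 v := Finset.sum_congr rfl (fun v _ => ht v)
  -- first grid application
  have happ1 := coeff_eq_grid_sum Q S t hScard (by rw [hsum_t]; exact hchain)
  -- the f-point
  let yf : V → ℚ := fun v => ((f v : ℕ) : ℚ)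
  have hyf_mem : yf ∈ Fintype.piFinset S := by
    rw [Fintype.mem_piFinset]
    intro v
    exact Finset.mem_image_of_mem _ (hf.1 v)
  have hvanish : ∀ y ∈ Fintype.piFinset S, y ≠ yf → MvPolynomial.eval y Q = 0 := by
    intro y hy hne
    by_contra hnz
    -- choose preimages
    have hpre : ∀ v, ∃ c ∈ L v, (c : ℚ) = y v := by
      intro v
      have := Fintype.mem_piFinset.1 hy v
      simpa [S, Finset.mem_image] using this
    choose g hg1 hg2 using hpre
    have hgproper : IsProperListColoring M L g := by
      refine ⟨hg1, fun u v hadj => ?_⟩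
      intro heq
      exact hnz (hQzero y hadj (by rw [← hg2 u, ← hg2 v, heq]))
    have : g = f := huniq g hgproper
    apply hne
    funext v
    rw [← hg2 v, this]
  have hcoeffne : MvPolynomial.coeff t Q ≠ 0 := by
    rw [happ1]
    rw [Finset.sum_eq_single_of_mem yf hyf_mem
      (fun y hy hne => by rw [hvanish y hy hne, zero_mul])]
    refine mul_ne_zero (hQne f hf.2) ?_
    refine Finset.prod_ne_zero_iff.2 (fun v _ => ?_)
    exact Lagrange.nodalWeight_ne_zero (Set.injOn_id _) (Fintype.mem_piFinset.1 hyf_mem v)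
  -- tightness
  have htot : (∑ v, t0 v) ≤ Q.totalDegree := by
    have hmem : t ∈ Q.support := MvPolynomial.mem_support_iff.2 hcoeffne
    have h1 := MvPolynomial.le_totalDegree hmem
    rwa [Finsupp.sum_fintype _ _ (fun _ => rfl), hsum_t] at h1
  have hupper : (∑ v, t0 v) ≤ ∑ _v : V, (k-2) := by
    refine le_trans htot (le_trans hQdeg (le_trans hD3 (le_trans hedge ?_)))
    rw [hn, Finset.sum_const, Finset.card_univ, smul_eq_mul]
  have hteq : ∀ v, t0 v = k - 2 := by
    have hsumeq : (∑ _v : V, (k-2)) = ∑ v, t0 v := le_antisymm ht0sum hupper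
    have hpt : ∀ v ∈ (univ : Finset V), k - 2 ≤ t0 v := by
      intro v _
      have := hL v
      simp only [t0]
      omega
    intro v
    exact ((Finset.sum_eq_sum_iff_of_le hpt).1 hsumeq v (Finset.mem_univ v)).symm
  -- second grid application with colors {0, ..., k-2}
  let S' : V → Finset ℚ := fun _ => (Finset.range (k-1)).image (fun c : ℕ => (c : ℚ))
  have hS'card : ∀ v, (S' v).card = t v + 1 := by
    intro v
    rw [ht, hteq v, Finset.card_image_of_injective _ Nat.cast_injective, Finset.card_range]
    omega
  have happ2 := coeff_eq_grid_sum Q S' t hS'card (by rw [hsum_t]; exact hchain)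
  rw [happ2] at hcoeffne
  obtain ⟨y, hy, hyne⟩ := Finset.exists_ne_zero_of_sum_ne_zero hcoeffne
  have hyQ : MvPolynomial.eval y Q ≠ 0 := fun h => hyne (by rw [h, zero_mul])
  have hpre : ∀ v, ∃ c ∈ Finset.range (k-1), (c : ℚ) = y v := by
    intro v
    have := Fintype.mem_piFinset.1 hy v
    simpa [S', Finset.mem_image] using this
  choose g hg1 hg2 using hpre
  have hgprop : ∀ u v, M.Adj u v → g u ≠ g v := by
    intro u v hadj heq
    exact hyQ (hQzero y hadj (by rw [← hg2 u, ← hg2 v, heq]))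
  refine hχ ⟨SimpleGraph.Coloring.mk (fun v => (⟨g v, Finset.mem_range.1 (hg1 v)⟩ : Fin (k-1)))
    (fun {u v} hadj => ?_)⟩
  intro hcontra
  exact hgprop u v hadj (by simpa using congrArg Fin.val hcontra)


lemma dichotomy (M : SimpleGraph V) (k : ℕ) (hk : 2 ≤ k)
    (hcc : ∀ L : V → Finset ℕ, (∀ v, (L v).card = k - 1) → ¬ ListColorable M L →
      ∀ u v : V, L u = L v)
    (hedgeM : ∃ u v : V, M.Adj u v)
    (L : V → Finset ℕ) (hL : ∀ v, k-1 ≤ (L v).card)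
    (hnb : ¬ ∃ C : Finset ℕ, C.card = k-1 ∧ ∀ v, L v = C) :
    ListColorable M L := by
  classical
  by_contra hnc
  have hsub : ∀ σ : V → Finset ℕ, (∀ v, σ v ⊆ L v) → (∀ v, (σ v).card = k - 1) →
      ∀ u v : V, σ u = σ v := by
    intro σ hσsub hσcard
    refine hcc σ hσcard ?_
    intro ⟨f, hf1, hf2⟩
    exact hnc ⟨f, fun v => hσsub v (hf1 v), hf2⟩
  obtain ⟨a, b, hab⟩ := hedgeM
  have hchoice : ∀ v : V, ∃ s ⊆ L v, s.card = k - 1 :=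
    fun v => Finset.exists_subset_card_eq (hL v)
  choose σ0 hσ0sub hσ0card using hchoice
  by_cases hall : ∀ v, (L v).card = k - 1
  · refine hnb ⟨L a, hall a, fun v => ?_⟩
    have : ∀ u v : V, L u = L v := hsub L (fun _ => Finset.Subset.refl _) hall
    exact this v a
  · push_neg at hall
    obtain ⟨x, hx⟩ := hall
    have hxge : k ≤ (L x).card := by have := hL x; omega
    obtain ⟨T, hTsub, hTcard⟩ := Finset.exists_subset_card_eq hxge
    obtain ⟨c₁, hc₁⟩ := Finset.card_pos.1 (by omega : 0 < T.card)
    obtain ⟨c₂, hc₂, hc₂ne⟩ := Finset.exists_mem_ne (by omega : 1 < T.card) c₁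
    -- two distinct (k-1)-subsets of L x
    set A := T.erase c₁ with hA
    set B := T.erase c₂ with hB
    have hAcard : A.card = k - 1 := by rw [hA, Finset.card_erase_of_mem hc₁, hTcard]
    have hBcard : B.card = k - 1 := by rw [hB, Finset.card_erase_of_mem hc₂, hTcard]
    have hABne : A ≠ B := by
      intro h
      have : c₂ ∈ A := Finset.mem_erase.2 ⟨hc₂ne, hc₂⟩
      rw [h] at this
      exact (Finset.mem_erase.1 this).1 rfl
    -- a vertex different from x
    have hz : ∃ z : V, z ≠ x := by
      by_cases h : a = x
      · exact ⟨b, fun hbx => M.ne_of_adj hab (h.trans hbx.symm)⟩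
      · exact ⟨a, h⟩
    obtain ⟨z, hzx⟩ := hz
    have mk : ∀ s : Finset ℕ, s ⊆ L x → s.card = k - 1 → s = σ0 z := by
      intro s hssub hscard
      have := hsub (fun v => if v = x then s else σ0 v)
        (fun v => by by_cases h : v = x <;> simp [h, hssub, hσ0sub])
        (fun v => by by_cases h : v = x <;> simp [h, hscard, hσ0card])
        x z
      simpa [hzx] using this
    exact hABne ((mk A (Finset.Subset.trans (Finset.erase_subset _ _) hTsub) hAcard).trans
      (mk B (Finset.Subset.trans (Finset.erase_subset _ _) hTsub) hBcard).symm)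

lemma two_colorings (M : SimpleGraph V) [Fintype M.edgeSet] (k : ℕ) (hk : 2 ≤ k)
    (hχ : M.chromaticNumber = (k : ℕ∞))
    (hcc : ∀ L : V → Finset ℕ, (∀ v, (L v).card = k - 1) → ¬ ListColorable M L →
      ∀ u v : V, L u = L v)
    (hedge : M.edgeFinset.card ≤ (Fintype.card V) * (k-2))
    (L : V → Finset ℕ) (hL : ∀ v, k-1 ≤ (L v).card)
    (hnb : ¬ ∃ C : Finset ℕ, C.card = k-1 ∧ ∀ v, L v = C) :
    ∃ f g, IsProperListColoring M L f ∧ IsProperListColoring M L g ∧ f ≠ g := by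
  classical
  have hedgeM : ∃ u v : V, M.Adj u v := by
    by_contra h
    push_neg at h
    have h1 : M.Colorable 1 := ⟨SimpleGraph.Coloring.mk (fun _ => 0)
      (fun {u v} hadj => absurd hadj (h u v))⟩
    have h2 := h1.chromaticNumber_le
    rw [hχ] at h2
    have : k ≤ 1 := by exact_mod_cast h2
    omega
  have hχn : ¬ M.Colorable (k-1) := by
    intro h
    have h2 := h.chromaticNumber_le
    rw [hχ] at h2
    have : k ≤ k - 1 := by exact_mod_cast h2
    omega
  obtain ⟨f, hf⟩ := dichotomy M k hk hcc hedgeM L hL hnb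
  by_contra hcon
  push_neg at hcon
  exact no_unique_coloring M k hk hχn hedge L hL f hf (fun g hg => (hcon f g hf hg).symm)


end AuxStmt10

section AuxStmt10b

variable {V : Type*}

lemma choose_unblocked (M : SimpleGraph V) (hedgeM : ∃ u v : V, M.Adj u v) (k : ℕ)
    (hk : 1 ≤ k)
    (T : V → Finset ℕ) (hT : ∀ u, k ≤ (T u).card)
    (f g : V → ℕ) (hfg : f ≠ g)
    (hfM : ∀ u v, M.Adj u v → f u ≠ f v) :
    (¬ ∃ C : Finset ℕ, C.card = k-1 ∧ ∀ u, T u \ {f u} = C) ∨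
    (¬ ∃ C : Finset ℕ, C.card = k-1 ∧ ∀ u, T u \ {g u} = C) := by
  classical
  by_contra hcon
  push_neg at hcon
  obtain ⟨⟨Cf, hCfcard, hCf⟩, ⟨Cg, hCgcard, hCg⟩⟩ := hcon
  have hmem : ∀ (h : V → ℕ) (C : Finset ℕ), C.card = k - 1 → (∀ u, T u \ {h u} = C) →
      ∀ u, h u ∈ T u := by
    intro h C hCcard hC u
    by_contra hnot
    have heq : T u \ {h u} = T u := Finset.sdiff_eq_self_of_disjoint (by simp [hnot])
    have hcard := hT u
    have hTC : T u = C := heq.symm.trans (hC u)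
    rw [hTC, hCcard] at hcard
    omega
  have hmemf := hmem f Cf hCfcard hCf
  have hmemg := hmem g Cg hCgcard hCg
  by_cases hCC : Cf = Cg
  · apply hfg
    funext u
    by_contra hne
    have h1 : g u ∈ T u \ {f u} := Finset.mem_sdiff.2 ⟨hmemg u, by simp [Ne.symm hne]⟩
    rw [hCf u, hCC, ← hCg u] at h1
    exact (Finset.mem_sdiff.1 h1).2 (by simp)
  · have hnsub : ¬ Cg ⊆ Cf := by
      intro hsub
      exact hCC (Finset.eq_of_subset_of_card_le hsub (by omega)).symm
    obtain ⟨d, hdCg, hdCf⟩ := Finset.not_subset.1 hnsub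
    have hconst : ∀ u, f u = d := by
      intro u
      have hdT : d ∈ T u := by
        have : d ∈ T u \ {g u} := by rw [hCg u]; exact hdCg
        exact (Finset.mem_sdiff.1 this).1
      by_contra hne
      exact hdCf (by rw [← hCf u]; exact Finset.mem_sdiff.2 ⟨hdT, by simp [Ne.symm hne]⟩)
    obtain ⟨a, b, hab⟩ := hedgeM
    exact hfM a b hab ((hconst a).trans (hconst b).symm)


end AuxStmt10b

/-- if `M` is strong `k`-chromatic-choosable with `m ≤ n(k-2)` and `H`
has a Hamilton path in which each vertex has at most `ρ` earlier neighbors, then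
`χ_ℓ(M □ H) ≤ k + ρ - 1`. -/
theorem stmt_10 {V : Type*} [Fintype V] (M : SimpleGraph V) [Fintype M.edgeSet]
    (k n m ρ t : ℕ) (hk : 2 ≤ k) (hM : StrongCC M k)
    (hn : Fintype.card V = n) (hm : M.edgeFinset.card = m)
    (hedge : m ≤ n * (k - 2)) (hρ : 1 ≤ ρ) (ht : 1 ≤ t)
    (H : SimpleGraph (Fin t))
    (hham : ∀ i : Fin t, ∀ hi : i.val + 1 < t, H.Adj i ⟨i.val + 1, hi⟩)
    (hback : ∀ i : Fin t, {j : Fin t | j < i ∧ H.Adj i j}.ncard ≤ ρ) :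
    listChromaticNumber (M.boxProd H) ≤ k + ρ - 1 := by
  classical
  have hχ := hM.1
  have hcc := hM.2
  have hedge' : M.edgeFinset.card ≤ (Fintype.card V) * (k-2) := by rw [hm, hn]; exact hedge
  have hedgeM : ∃ u v : V, M.Adj u v := by
    by_contra h
    push_neg at h
    have h1 : M.Colorable 1 := ⟨SimpleGraph.Coloring.mk (fun _ => 0)
      (fun {u v} hadj => absurd hadj (h u v))⟩
    have h2 := h1.chromaticNumber_le
    rw [hχ] at h2
    have : k ≤ 1 := by exact_mod_cast h2
    omega
  have hchoos : Choosable (M.boxProd H) (k + ρ - 1) := by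
    intro L hLcard
    -- earlier neighbours
    set Nb : Fin t → Finset (Fin t) := fun i => univ.filter (fun j => j < i ∧ H.Adj i j) with hNbdef
    have hNbmem : ∀ {j i : Fin t}, j ∈ Nb i ↔ (j < i ∧ H.Adj i j) := by
      intro j i
      simp [hNbdef]
    have hNbcard : ∀ i, (Nb i).card ≤ ρ := by
      intro i
      have h1 : {j : Fin t | j < i ∧ H.Adj i j} = ↑(Nb i) := by
        ext j
        simp [hNbdef]
      have := hback i
      rwa [h1, Set.ncard_coe_finset] at this
    -- residual lists
    set Res : (Fin t → V → ℕ) → Fin t → V → Finset ℕ :=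
      fun c i u => L (u, i) \ (Nb i).image (fun j => c j u) with hResdef
    have hRescard : ∀ c i u, k - 1 ≤ (Res c i u).card := by
      intro c i u
      have h1 := Finset.card_le_card_sdiff_add_card (s := L (u,i)) (t := (Nb i).image (fun j => c j u))
      have h2 : ((Nb i).image (fun j => c j u)).card ≤ ρ :=
        le_trans (Finset.card_image_le) (hNbcard i)
      have h3 := hLcard (u, i)
      simp only [hResdef]
      omega
    have hResEq : ∀ (c c' : Fin t → V → ℕ) (j : Fin t),
        (∀ j' : Fin t, j' < j → c j' = c' j') → Res c j = Res c' j := by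
      intro c c' j hagree
      funext u
      simp only [hResdef]
      congr 1
      refine Finset.image_congr (fun j' hj' => ?_)
      rw [hagree j' (hNbmem.1 hj').1]
    have main : ∀ i : ℕ, i ≤ t → ∃ c : Fin t → V → ℕ,
        (∀ j : Fin t, j.val < i →
          ((∀ u, c j u ∈ Res c j u) ∧ (∀ u v, M.Adj u v → c j u ≠ c j v))) ∧
        (∀ hi : i < t, ¬ ∃ C : Finset ℕ, C.card = k-1 ∧ ∀ u, Res c ⟨i, hi⟩ u = C) := by
      intro i
      induction i with
      | zero =>
        intro _
        refine ⟨fun _ _ => 0, fun j hj => absurd hj (Nat.not_lt_zero _), fun hi => ?_⟩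
        rintro ⟨C, hCcard, hC⟩
        obtain ⟨a, _, _⟩ := hedgeM
        have hNb0 : Nb ⟨0, hi⟩ = ∅ := by
          ext j
          simp only [hNbmem, Finset.notMem_empty, iff_false]
          rintro ⟨hj, -⟩
          exact absurd hj (by simp [Fin.lt_def])
        have : Res (fun _ _ => 0) ⟨0, hi⟩ a = L (a, ⟨0, hi⟩) := by
          simp [hResdef, hNb0]
        have hca := hLcard (a, ⟨0, hi⟩)
        rw [← this, hC a, hCcard] at hca
        omega
      | succ i ih =>
        intro hsucc
        have hit : i < t := Nat.lt_of_succ_le hsucc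
        obtain ⟨c, hcprop, hcnb⟩ := ih (Nat.le_of_lt hit)
        set I : Fin t := ⟨i, hit⟩ with hIdef
        obtain ⟨f, g, hf, hg, hfg⟩ := two_colorings M k hk hχ hcc hedge'
          (Res c I) (fun u => hRescard c I u) (hcnb hit)
        -- facts about updating
        have hupd_prop : ∀ h : V → ℕ, IsProperListColoring M (Res c I) h →
            (∀ j : Fin t, j.val < i + 1 →
              ((∀ u, (Function.update c I h) j u ∈ Res (Function.update c I h) j u) ∧
               (∀ u v, M.Adj u v → (Function.update c I h) j u ≠ (Function.update c I h) j v))) := by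
          intro h hh j hj
          have hagree : ∀ j' : Fin t, j' < j → c j' = (Function.update c I h) j' := by
            intro j' hj'
            have : j' ≠ I := by
              intro he
              rw [he] at hj'
              have : i < j.val := hj'
              omega
            rw [Function.update_of_ne this]
          have hResj : Res c j = Res (Function.update c I h) j := hResEq _ _ _ hagree
          by_cases hjI : j = I
          · subst hjI
            rw [← hResj, Function.update_self]
            exact ⟨hh.1, hh.2⟩
          · rw [← hResj, Function.update_of_ne hjI]
            have hjlt : j.val < i := by
              rcases Nat.lt_succ_iff_lt_or_eq.1 hj with h' | h'
              · exact h'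
              · exact absurd (Fin.ext h' : j = I) hjI
            exact hcprop j hjlt
        by_cases hlast : i + 1 < t
        · -- dodge the blocking coloring
          set I' : Fin t := ⟨i+1, hlast⟩ with hI'def
          have hII' : I ∈ Nb I' := by
            rw [hNbmem]
            constructor
            · simp [Fin.lt_def, hIdef, hI'def]
            · exact (hham I (by simpa [hIdef] using hlast)).symm
          set T : V → Finset ℕ := fun u => L (u, I') \ ((Nb I').erase I).image (fun j => c j u)
            with hTdef
          have hTcard : ∀ u, k ≤ (T u).card := by
            intro u
            have h1 := Finset.card_le_card_sdiff_add_card (s := L (u,I'))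
              (t := ((Nb I').erase I).image (fun j => c j u))
            have h2 : (((Nb I').erase I).image (fun j => c j u)).card ≤ ρ - 1 := by
              refine le_trans (Finset.card_image_le) ?_
              rw [Finset.card_erase_of_mem hII']
              have := hNbcard I'
              omega
            have h3 := hLcard (u, I')
            simp only [hTdef]
            omega
          have hres' : ∀ (h : V → ℕ) (u : V),
              Res (Function.update c I h) I' u = T u \ {h u} := by
            intro h u
            simp only [hResdef, hTdef]
            rw [← Finset.insert_erase hII', Finset.image_insert, Function.update_self]
            have himg : ((Nb I').erase I).image (fun j => (Function.update c I h) j u)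
                = ((Nb I').erase I).image (fun j => c j u) := by
              refine Finset.image_congr (fun j' hj' => ?_)
              rw [Function.update_of_ne (Finset.ne_of_mem_erase hj')]
            rw [himg, Finset.sdiff_insert, ← Finset.sdiff_singleton_eq_erase,
              Finset.erase_insert (Finset.notMem_erase _ _)]
          rcases choose_unblocked M hedgeM k (by omega) T hTcard f g hfg hf.2 with hok | hok
          · refine ⟨Function.update c I f, hupd_prop f hf, fun hi' => ?_⟩
            intro ⟨C, hCcard, hC⟩
            refine hok ⟨C, hCcard, fun u => ?_⟩
            rw [← hres' f u]
            exact hC u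
          · refine ⟨Function.update c I g, hupd_prop g hg, fun hi' => ?_⟩
            intro ⟨C, hCcard, hC⟩
            refine hok ⟨C, hCcard, fun u => ?_⟩
            rw [← hres' g u]
            exact hC u
        · exact ⟨Function.update c I f, hupd_prop f hf, fun hi' => absurd hi' hlast⟩
    obtain ⟨c, hcprop, -⟩ := main t (le_refl t)
    refine ⟨fun x => c x.2 x.1, fun x => ?_, fun x y hadj => ?_⟩
    · have h1 := (hcprop x.2 x.2.isLt).1 x.1
      have h2 : Res c x.2 x.1 ⊆ L (x.1, x.2) := Finset.sdiff_subset
      exact h2 h1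
    · rw [SimpleGraph.boxProd_adj] at hadj
      rcases hadj with ⟨hMadj, heq2⟩ | ⟨hHadj, heq1⟩
      · have h0 := (hcprop y.2 y.2.isLt).2 x.1 y.1 hMadj
        show c x.2 x.1 ≠ c y.2 y.1
        rw [heq2]
        exact h0
      · rcases lt_trichotomy x.2 y.2 with hlt | heq | hgt
        · -- x.2 < y.2 : x.2 ∈ Nb y.2
          have hmem : x.2 ∈ Nb y.2 := hNbmem.2 ⟨hlt, hHadj.symm⟩
          have h1 := (hcprop y.2 y.2.isLt).1 y.1
          have h2 : c x.2 y.1 ∈ (Nb y.2).image (fun j => c j y.1) :=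
            Finset.mem_image_of_mem _ hmem
          show c x.2 x.1 ≠ c y.2 y.1
          intro hcontra
          rw [heq1] at hcontra
          rw [hcontra] at h2
          exact (Finset.mem_sdiff.1 h1).2 h2
        · exact absurd (heq ▸ hHadj) (H.irrefl)
        · have hmem : y.2 ∈ Nb x.2 := hNbmem.2 ⟨hgt, hHadj⟩
          have h1 := (hcprop x.2 x.2.isLt).1 x.1
          have h2 : c y.2 x.1 ∈ (Nb x.2).image (fun j => c j x.1) :=
            Finset.mem_image_of_mem _ hmem
          show c x.2 x.1 ≠ c y.2 y.1
          intro hcontra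
          rw [← heq1] at hcontra
          rw [← hcontra] at h2
          exact (Finset.mem_sdiff.1 h1).2 h2
  exact Nat.sInf_le hchoos
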